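/- Fix a factor-graph over finite variables V with finite nonempty domains X_i and a finite nonempty family F of real-valued factors f_I on scopes S_I; let y* := min_x max_{I∈F} f_I(x|_{S_I}) be the min-max value. Call a family of pseudo-marginals (p_I : ∏_{i∈S_I} X_i → ℝ)_{I∈F} together with (p_i : X_i → ℝ)_{i∈V} feasible if all values are nonnegative, ∑_{x_i∈X_i} p_i(x_i) = 1 for every i ∈ V, and for every I ∈ F, i ∈ S_I and x_i ∈ X_i, the marginal of p_I obtained by summing over the coordinates in S_I∖{i} at value x_i equals p_i(x_i) (local consistency). Then: (a) there exists a feasible family whose LP objective max_{I∈F} ∑_{x_{S_I}} p_I(x_{S_I}) f_I(x_{S_I}) equals y* (the point masses of a min-max optimizer are feasible), so the LP optimum lower-bounds the min-max value; and (b) every feasible family in which each p_i takes only the values 0 and 1 has LP objective max_{I∈F} ∑_{x_{S_I}} p_I(x_{S_I}) f_I(x_{S_I}) ≥ y*. (This is the paper's claim on the LP relaxation of min-max inference.) -/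

import Mathlib

/-- A family of pseudo-marginals is feasible for the min-max LP if all values are
nonnegative, the single-variable pseudo-marginals are normalized, and locally
consistent with the factor pseudo-marginals. -/
def FeasibleFamily {V F : Type*} [DecidableEq V]
    (X : V → Type*) [∀ i, Fintype (X i)] [∀ i, DecidableEq (X i)]
    (S : F → Finset V)
    (pF : (I : F) → ((i : S I) → X i.1) → ℝ)
    (pV : (i : V) → X i → ℝ) : Prop :=
  (∀ (I : F) (xI : (i : S I) → X i.1), 0 ≤ pF I xI) ∧
  (∀ (i : V) (xi : X i), 0 ≤ pV i xi) ∧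
  (∀ i : V, ∑ xi : X i, pV i xi = 1) ∧
  (∀ (I : F) (i : S I) (xi : X i.1),
    ∑ xI ∈ Finset.univ.filter (fun xI : (j : S I) → X j.1 => xI i = xi), pF I xI
      = pV i.1 xi)

/-- LP relaxation of min-max inference: (a) some feasible family attains the
min-max value y* as its LP objective (so the LP optimum lower-bounds y*), and
(b) every feasible family with 0/1-valued single-variable pseudo-marginals has
LP objective at least y*. -/
theorem minmax_lp_relaxation {V F : Type*} [Fintype V] [DecidableEq V] [Fintype F]
    [Nonempty F]
    (X : V → Type*) [∀ i, Fintype (X i)] [∀ i, Nonempty (X i)] [∀ i, DecidableEq (X i)]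
    (S : F → Finset V) (hS : ∀ I, (S I).Nonempty)
    (f : (I : F) → ((i : S I) → X i.1) → ℝ)
    (ystar : ℝ)
    (hy : ystar = Finset.univ.inf' Finset.univ_nonempty fun x : (i : V) → X i =>
        Finset.univ.sup' Finset.univ_nonempty fun I : F => f I fun i => x i.1) :
    (∃ (pF : (I : F) → ((i : S I) → X i.1) → ℝ) (pV : (i : V) → X i → ℝ),
        FeasibleFamily X S pF pV ∧
        (Finset.univ.sup' Finset.univ_nonempty fun I : F =>
            ∑ xI : (i : S I) → X i.1, pF I xI * f I xI) = ystar) ∧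
    (∀ (pF : (I : F) → ((i : S I) → X i.1) → ℝ) (pV : (i : V) → X i → ℝ),
        FeasibleFamily X S pF pV →
        (∀ (i : V) (xi : X i), pV i xi = 0 ∨ pV i xi = 1) →
        ystar ≤ Finset.univ.sup' Finset.univ_nonempty fun I : F =>
            ∑ xI : (i : S I) → X i.1, pF I xI * f I xI) := by
  constructor
  · -- part (a)
    obtain ⟨x, -, hxval⟩ := Finset.exists_mem_eq_inf' (Finset.univ_nonempty)
      (fun x : (i : V) → X i =>
        Finset.univ.sup' Finset.univ_nonempty fun I : F => f I fun i => x i.1)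
    refine ⟨fun I xI => if xI = (fun i : S I => x i.1) then 1 else 0,
      fun i xi => if xi = x i then 1 else 0, ⟨?_, ?_, ?_, ?_⟩, ?_⟩
    · intro I xI; dsimp only; split <;> norm_num
    · intro i xi; dsimp only; split <;> norm_num
    · intro i; simp
    · intro I i xi
      dsimp only
      by_cases hxi : xi = x i.1
      · subst hxi
        rw [if_pos rfl]
        have h1 : ((fun j : S I => x j.1) : (j : S I) → X j.1) ∈
            Finset.univ.filter (fun xI : (j : S I) → X j.1 => xI i = x i.1) := by
          simp
        rw [Finset.sum_eq_single_of_mem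
          (f := fun xI : (j : S I) → X j.1 =>
            if xI = (fun j : S I => x j.1) then (1:ℝ) else 0)
          (fun j : S I => x j.1) h1
          (fun b _ hb => if_neg hb)]
        exact if_pos rfl
      · rw [if_neg hxi]
        apply Finset.sum_eq_zero
        intro b hb
        apply if_neg
        intro hbeq
        apply hxi
        rw [Finset.mem_filter] at hb
        rw [← hb.2, hbeq]
    · have hobj : ∀ I : F,
          ∑ xI : (i : S I) → X i.1,
            (if xI = (fun i : S I => x i.1) then (1:ℝ) else 0) * f I xI
          = f I (fun i : S I => x i.1) := by
        intro I
        rw [Finset.sum_eq_single_of_mem (s := (Finset.univ : Finset ((j : S I) → X j.1)))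
          (f := fun xI => (if xI = (fun i : S I => x i.1) then (1:ℝ) else 0) * f I xI)
          (fun i : S I => x i.1) (Finset.mem_univ _)
          (fun b _ hb => mul_eq_zero_of_left (if_neg hb) (f I b))]
        simp
      rw [Finset.sup'_congr Finset.univ_nonempty rfl (fun I _ => hobj I)]
      rw [hy, hxval]
  · -- part (b)
    intro pF pV hfeas h01
    obtain ⟨hFnn, hVnn, hnorm, hcons⟩ := hfeas
    have hex : ∀ i : V, ∃ xi : X i, pV i xi = 1 := by
      intro i
      by_contra h
      push_neg at h
      have : ∑ xi : X i, pV i xi = 0 := by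
        apply Finset.sum_eq_zero
        intro xi _
        rcases h01 i xi with h0 | h1
        · exact h0
        · exact absurd h1 (h xi)
      rw [hnorm i] at this
      norm_num at this
    choose x hx1 using hex
    have hzero : ∀ (i : V) (xi : X i), xi ≠ x i → pV i xi = 0 := by
      intro i xi hne
      rcases h01 i xi with h0 | h1
      · exact h0
      exfalso
      have hle : ∑ t ∈ ({x i, xi} : Finset (X i)), pV i t ≤ ∑ t : X i, pV i t :=
        Finset.sum_le_sum_of_subset_of_nonneg (Finset.subset_univ _)
          (fun t _ _ => hVnn i t)
      rw [Finset.sum_pair (Ne.symm hne), hnorm i, hx1 i, h1] at hle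
      linarith
    have hsupp : ∀ (I : F) (xI : (j : S I) → X j.1),
        xI ≠ (fun j : S I => x j.1) → pF I xI = 0 := by
      intro I xI hne
      have : ∃ j : S I, xI j ≠ x j.1 := by
        by_contra h; push_neg at h; exact hne (funext h)
      obtain ⟨j, hj⟩ := this
      have hm := hcons I j (xI j)
      rw [hzero j.1 (xI j) hj] at hm
      exact (Finset.sum_eq_zero_iff_of_nonneg (fun y _ => hFnn I y)).mp hm xI (by simp)
    have hone : ∀ I : F, pF I (fun j => x j.1) = 1 := by
      intro I
      obtain ⟨i, hi⟩ := hS I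
      have hm := hcons I ⟨i, hi⟩ (x i)
      rw [hx1 i] at hm
      rw [← hm]
      symm
      apply Finset.sum_eq_single_of_mem
      · simp
      · intro b _ hbne
        exact hsupp I b hbne
    have hobj : ∀ I : F,
        ∑ xI : (j : S I) → X j.1, pF I xI * f I xI = f I (fun j => x j.1) := by
      intro I
      rw [Finset.sum_eq_single_of_mem (s := (Finset.univ : Finset ((j : S I) → X j.1)))
        (f := fun xI => pF I xI * f I xI) (fun j => x j.1) (Finset.mem_univ _)
        (fun b _ hb => mul_eq_zero_of_left (hsupp I b hb) (f I b)), hone, one_mul]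
    rw [Finset.sup'_congr Finset.univ_nonempty rfl (fun I _ => hobj I), hy]
    exact Finset.inf'_le _ (Finset.mem_univ x)
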